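/- Let M, N ≥ 1 be such that M+1 divides N+1. Then there exists an injective group homomorphism from the sandpile group G_{Γ_M} on the M×M square domain to the sandpile group G_{Γ_N} on the N×N square domain. -/

import Mathlib

/-- Two vertices of `ℤ²` are adjacent iff their Euclidean distance is `1`. -/
def adj (u v : ℤ × ℤ) : Prop := (u.1 - v.1) ^ 2 + (u.2 - v.2) ^ 2 = 1

instance : DecidableRel adj := fun u v => by unfold adj; infer_instance

/-- The reduced Laplacian of a finite domain `Γ ⊂ ℤ²`. -/
def lap {R : Type*} [CommRing R] (Γ : Finset (ℤ × ℤ)) (f : ↥Γ → R) : ↥Γ → R :=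
  fun v => (∑ w ∈ Γ.attach.filter (fun w => adj w.1 v.1), f w) - 4 * f v

lemma lap_add {R : Type*} [CommRing R] (Γ : Finset (ℤ × ℤ)) (f g : ↥Γ → R) :
    lap Γ (f + g) = lap Γ f + lap Γ g := by
  funext v; simp [lap, Finset.sum_add_distrib]; ring

lemma lap_neg {R : Type*} [CommRing R] (Γ : Finset (ℤ × ℤ)) (f : ↥Γ → R) :
    lap Γ (-f) = -(lap Γ f) := by
  funext v; simp [lap]; ring

lemma lap_smul {R : Type*} [CommRing R] (Γ : Finset (ℤ × ℤ)) (c : R) (f : ↥Γ → R) :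
    lap Γ (c • f) = c • lap Γ f := by
  funext v
  simp only [lap, Pi.smul_apply, smul_eq_mul, mul_sub, Finset.mul_sum]
  ring

lemma lap_zero {R : Type*} [CommRing R] (Γ : Finset (ℤ × ℤ)) :
    lap Γ (0 : ↥Γ → R) = 0 := by
  funext v; simp [lap]

/-- The boundary `∂Γ`: vertices of `Γ` adjacent to some vertex of `ℤ² \ Γ`. -/
noncomputable def boundary (Γ : Finset (ℤ × ℤ)) : Finset (ℤ × ℤ) :=
  @Finset.filter _ (fun v => ∃ w : ℤ × ℤ, w ∉ Γ ∧ adj w v) (Classical.decPred _) Γ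

lemma boundary_subset (Γ : Finset (ℤ × ℤ)) : boundary Γ ⊆ Γ :=
  @Finset.filter_subset _ (fun v => ∃ w : ℤ × ℤ, w ∉ Γ ∧ adj w v) (Classical.decPred _) Γ

/-- A function on `Γ` is harmonic if its Laplacian vanishes on the interior `Γ \ ∂Γ`. -/
def Harmonic {R : Type*} [CommRing R] (Γ : Finset (ℤ × ℤ)) (f : ↥Γ → R) : Prop :=
  ∀ v : ↥Γ, (v : ℤ × ℤ) ∉ boundary Γ → lap Γ f v = 0

/-- `Γ ⊂ ℤ²` is a convex domain if it is the set of lattice points of a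
convex open subset of `ℝ²`. -/
def IsConvexDomain (Γ : Finset (ℤ × ℤ)) : Prop :=
  ∃ P : Set (ℝ × ℝ), Convex ℝ P ∧ IsOpen P ∧
    ∀ v : ℤ × ℤ, v ∈ Γ ↔ ((v.1 : ℝ), (v.2 : ℝ)) ∈ P

/-- The reduced Laplacian as an additive group homomorphism on `ℤ^Γ`. -/
def lapHom (Γ : Finset (ℤ × ℤ)) : (↥Γ → ℤ) →+ (↥Γ → ℤ) where
  toFun := lap Γ
  map_zero' := lap_zero Γ
  map_add' := lap_add Γ

/-- The sandpile group `G_Γ = ℤ^Γ / Δ_Γ(ℤ^Γ)`. -/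
def SandpileGroup (Γ : Finset (ℤ × ℤ)) : Type :=
  (↥Γ → ℤ) ⧸ (lapHom Γ).range

instance (Γ : Finset (ℤ × ℤ)) : AddCommGroup (SandpileGroup Γ) :=
  inferInstanceAs (AddCommGroup ((↥Γ → ℤ) ⧸ (lapHom Γ).range))

/-- The canonical projection `ℤ^Γ → G_Γ`. -/
def sandMk (Γ : Finset (ℤ × ℤ)) : (↥Γ → ℤ) →+ SandpileGroup Γ :=
  QuotientAddGroup.mk' _

/-- The `N×N` square domain `Γ_N = {1, …, N} × {1, …, N} ⊂ ℤ²`. -/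
noncomputable def squareDomain (N : ℕ) : Finset (ℤ × ℤ) :=
  Finset.Icc 1 (N : ℤ) ×ˢ Finset.Icc 1 (N : ℤ)

set_option linter.unreachableTactic false
set_option linter.unusedTactic false

def sgn1 (K x : ℤ) : ℤ :=
  if x % (2*K) = 0 ∨ x % (2*K) = K then 0 else if x % (2*K) < K then 1 else -1

def rep1 (K x : ℤ) : ℤ :=
  if x % (2*K) ≤ K then x % (2*K) else 2*K - x % (2*K)

lemma emod_range (K x : ℤ) (hK : 2 ≤ K) : 0 ≤ x % (2*K) ∧ x % (2*K) < 2*K :=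
  ⟨Int.emod_nonneg x (by omega), Int.emod_lt_of_pos x (by omega)⟩

lemma emod_add_one (K x : ℤ) (hK : 2 ≤ K) :
    (x+1) % (2*K) = if x % (2*K) = 2*K - 1 then 0 else x % (2*K) + 1 := by
  obtain ⟨h0, h1⟩ := emod_range K x hK
  have hx : x = x % (2*K) + 2*K * (x / (2*K)) := by
    have := Int.mul_ediv_add_emod x (2*K); omega
  rw [show x + 1 = x % (2*K) + 1 + 2*K * (x / (2*K)) by omega]
  rw [Int.add_mul_emod_self_left]
  split_ifs with h
  · rw [h, show 2*K - 1 + 1 = 2*K by ring, Int.emod_self]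
  · exact Int.emod_eq_of_lt (by omega) (by omega)

lemma emod_sub_one (K x : ℤ) (hK : 2 ≤ K) :
    (x-1) % (2*K) = if x % (2*K) = 0 then 2*K - 1 else x % (2*K) - 1 := by
  obtain ⟨h0, h1⟩ := emod_range K x hK
  have hx : x = x % (2*K) + 2*K * (x / (2*K)) := by
    have := Int.mul_ediv_add_emod x (2*K); omega
  split_ifs with h
  · have hs : 2*K*(x/(2*K)-1) = 2*K*(x/(2*K)) - 2*K := by ring
    rw [show x - 1 = 2*K - 1 + 2*K * (x / (2*K) - 1) by omega]
    rw [Int.add_mul_emod_self_left]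
    exact Int.emod_eq_of_lt (by omega) (by omega)
  · rw [show x - 1 = x % (2*K) - 1 + 2*K * (x / (2*K)) by omega]
    rw [Int.add_mul_emod_self_left]
    exact Int.emod_eq_of_lt (by omega) (by omega)

lemma sgn1_in_range (K x : ℤ) (hK : 2 ≤ K) (h1 : 1 ≤ x) (h2 : x ≤ K - 1) :
    sgn1 K x = 1 ∧ rep1 K x = x := by
  have hm : x % (2*K) = x := Int.emod_eq_of_lt (by omega) (by omega)
  unfold sgn1 rep1
  rw [hm]
  split_ifs <;> omega

lemma rep1_of_sgn1_ne (K x : ℤ) (hK : 2 ≤ K) (h : sgn1 K x ≠ 0) :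
    1 ≤ rep1 K x ∧ rep1 K x ≤ K - 1 := by
  obtain ⟨h0, h1⟩ := emod_range K x hK
  unfold sgn1 at h
  unfold rep1
  split_ifs at h ⊢ <;> omega

lemma sgn1_of_dvd (K x : ℤ) (hK : 2 ≤ K) (h : K ∣ x) : sgn1 K x = 0 := by
  obtain ⟨t, rfl⟩ := h
  have ht : t % 2 = 0 ∨ t % 2 = 1 := by omega
  have hmod : K * t % (2*K) = K * (t % 2) := by
    rw [show K * t = K * (t % 2) + 2*K * (t / 2) by
      have := Int.mul_ediv_add_emod t 2; nlinarith [Int.mul_ediv_add_emod t 2]]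
    rw [Int.add_mul_emod_self_left]
    exact Int.emod_eq_of_lt (by rcases ht with h|h <;> rw [h] <;> omega)
      (by rcases ht with h|h <;> rw [h] <;> omega)
  unfold sgn1
  rcases ht with h|h <;> rw [hmod, h] <;> split_ifs <;> omega

lemma oneD {R : Type*} [CommRing R] (K : ℤ) (hK : 2 ≤ K) (u : ℤ → R)
    (hu : ∀ z : ℤ, z ≤ 0 ∨ K ≤ z → u z = 0) (x : ℤ) :
    ((sgn1 K (x+1) : ℤ) : R) * u (rep1 K (x+1)) + ((sgn1 K (x-1) : ℤ) : R) * u (rep1 K (x-1))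
      = ((sgn1 K x : ℤ) : R) * (u (rep1 K x + 1) + u (rep1 K x - 1)) := by
  obtain ⟨h0, h1⟩ := emod_range K x hK
  have e1 := emod_add_one K x hK
  have e2 := emod_sub_one K x hK
  have hs : ∀ y : ℤ, sgn1 K y =
      if y % (2*K) = 0 ∨ y % (2*K) = K then 0 else if y % (2*K) < K then 1 else -1 :=
    fun y => rfl
  have hr : ∀ y : ℤ, rep1 K y = if y % (2*K) ≤ K then y % (2*K) else 2*K - y % (2*K) :=
    fun y => rfl
  set r := x % (2*K) with hrdef
  have key : ∀ a b : ℤ, sgn1 K (x+1) = a → rep1 K (x+1) = b →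
      ∀ c d : ℤ, sgn1 K (x-1) = c → rep1 K (x-1) = d →
      ∀ e g : ℤ, sgn1 K x = e → rep1 K x = g →
      ((a:R) * u b + (c:R) * u d = (e:R) * (u (g+1) + u (g-1))) →
      ((sgn1 K (x+1) : ℤ) : R) * u (rep1 K (x+1)) + ((sgn1 K (x-1) : ℤ) : R) * u (rep1 K (x-1))
        = ((sgn1 K x : ℤ) : R) * (u (rep1 K x + 1) + u (rep1 K x - 1)) := by
    intro a b ha hb c d hc hd e g he hg hmain
    rw [ha, hb, hc, hd, he, hg]; exact hmain
  rcases (by omega : r = 0 ∨ (1 ≤ r ∧ r ≤ K - 1) ∨ r = K ∨ (K + 1 ≤ r ∧ r ≤ 2*K - 2) ∨ r = 2*K - 1) with h | h | h | h | h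
  · -- r = 0
    refine key 1 1 ?_ ?_ (-1) 1 ?_ ?_ 0 0 ?_ ?_ ?_
    · rw [hs, e1]; split_ifs <;> omega
    · rw [hr, e1]; split_ifs <;> omega
    · rw [hs, e2]; split_ifs <;> omega
    · rw [hr, e2]; split_ifs <;> omega
    · rw [hs]; split_ifs <;> omega
    · rw [hr]; split_ifs <;> omega
    · push_cast; ring
  · -- 1 ≤ r ≤ K-1
    by_cases hb1 : r + 1 = K
    · by_cases hb2 : r = 1
      · refine key 0 K ?_ ?_ 0 0 ?_ ?_ 1 r ?_ ?_ ?_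
        · rw [hs, e1]; split_ifs <;> omega
        · rw [hr, e1]; split_ifs <;> omega
        · rw [hs, e2]; split_ifs <;> omega
        · rw [hr, e2]; split_ifs <;> omega
        · rw [hs]; split_ifs <;> omega
        · rw [hr]; split_ifs <;> omega
        · rw [hu (r+1) (by omega), hu (r-1) (by omega)]; push_cast; ring
      · refine key 0 K ?_ ?_ 1 (r-1) ?_ ?_ 1 r ?_ ?_ ?_
        · rw [hs, e1]; split_ifs <;> omega
        · rw [hr, e1]; split_ifs <;> omega
        · rw [hs, e2]; split_ifs <;> omega
        · rw [hr, e2]; split_ifs <;> omega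
        · rw [hs]; split_ifs <;> omega
        · rw [hr]; split_ifs <;> omega
        · rw [hu (r+1) (by omega)]; push_cast; ring
    · by_cases hb2 : r = 1
      · refine key 1 (r+1) ?_ ?_ 0 0 ?_ ?_ 1 r ?_ ?_ ?_
        · rw [hs, e1]; split_ifs <;> omega
        · rw [hr, e1]; split_ifs <;> omega
        · rw [hs, e2]; split_ifs <;> omega
        · rw [hr, e2]; split_ifs <;> omega
        · rw [hs]; split_ifs <;> omega
        · rw [hr]; split_ifs <;> omega
        · rw [hu (r-1) (by omega)]; push_cast; ring
      · refine key 1 (r+1) ?_ ?_ 1 (r-1) ?_ ?_ 1 r ?_ ?_ ?_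
        · rw [hs, e1]; split_ifs <;> omega
        · rw [hr, e1]; split_ifs <;> omega
        · rw [hs, e2]; split_ifs <;> omega
        · rw [hr, e2]; split_ifs <;> omega
        · rw [hs]; split_ifs <;> omega
        · rw [hr]; split_ifs <;> omega
        · push_cast; ring
  · -- r = K
    refine key (-1) (K-1) ?_ ?_ 1 (K-1) ?_ ?_ 0 K ?_ ?_ ?_
    · rw [hs, e1]; split_ifs <;> omega
    · rw [hr, e1]; split_ifs <;> omega
    · rw [hs, e2]; split_ifs <;> omega
    · rw [hr, e2]; split_ifs <;> omega
    · rw [hs]; split_ifs <;> omega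
    · rw [hr]; split_ifs <;> omega
    · push_cast; ring
  · -- K+1 ≤ r ≤ 2K-2
    by_cases hb1 : r = K + 1
    · refine key (-1) (2*K-r-1) ?_ ?_ 0 K ?_ ?_ (-1) (2*K-r) ?_ ?_ ?_
      · rw [hs, e1]; split_ifs <;> omega
      · rw [hr, e1]; split_ifs <;> omega
      · rw [hs, e2]; split_ifs <;> omega
      · rw [hr, e2]; split_ifs <;> omega
      · rw [hs]; split_ifs <;> omega
      · rw [hr]; split_ifs <;> omega
      · rw [hu (2*K-r+1) (by omega)]; push_cast; ring
    · refine key (-1) (2*K-r-1) ?_ ?_ (-1) (2*K-r+1) ?_ ?_ (-1) (2*K-r) ?_ ?_ ?_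
      · rw [hs, e1]; split_ifs <;> omega
      · rw [hr, e1]; split_ifs <;> omega
      · rw [hs, e2]; split_ifs <;> omega
      · rw [hr, e2]; split_ifs <;> omega
      · rw [hs]; split_ifs <;> omega
      · rw [hr]; split_ifs <;> omega
      · push_cast; ring
  · -- r = 2K-1
    by_cases hb1 : K = 2
    · refine key 0 0 ?_ ?_ 0 K ?_ ?_ (-1) 1 ?_ ?_ ?_
      · rw [hs, e1]; split_ifs <;> omega
      · rw [hr, e1]; split_ifs <;> omega
      · rw [hs, e2]; split_ifs <;> omega
      · rw [hr, e2]; split_ifs <;> omega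
      · rw [hs]; split_ifs <;> omega
      · rw [hr]; split_ifs <;> omega
      · rw [show (1:ℤ)+1 = 2 by norm_num, show (1:ℤ)-1 = 0 by norm_num,
            hu 2 (by omega), hu 0 (by omega)]; push_cast; ring
    · refine key 0 0 ?_ ?_ (-1) 2 ?_ ?_ (-1) 1 ?_ ?_ ?_
      · rw [hs, e1]; split_ifs <;> omega
      · rw [hr, e1]; split_ifs <;> omega
      · rw [hs, e2]; split_ifs <;> omega
      · rw [hr, e2]; split_ifs <;> omega
      · rw [hs]; split_ifs <;> omega
      · rw [hr]; split_ifs <;> omega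
      · rw [show (1:ℤ)+1 = 2 by norm_num, show (1:ℤ)-1 = 0 by norm_num,
            hu 0 (by omega)]; push_cast; ring

lemma adj_iff (u v : ℤ × ℤ) : adj u v ↔
    (u = (v.1+1, v.2) ∨ u = (v.1-1, v.2) ∨ u = (v.1, v.2+1) ∨ u = (v.1, v.2-1)) := by
  unfold adj
  constructor
  · intro h
    have h1 : (u.1 - v.1)^2 ≤ 1 := by nlinarith [sq_nonneg (u.2 - v.2)]
    have h2 : (u.2 - v.2)^2 ≤ 1 := by nlinarith [sq_nonneg (u.1 - v.1)]
    have h3 : -1 ≤ u.1 - v.1 ∧ u.1 - v.1 ≤ 1 := by constructor <;> nlinarith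
    have h4 : -1 ≤ u.2 - v.2 ∧ u.2 - v.2 ≤ 1 := by constructor <;> nlinarith
    have ha : u.1 - v.1 = -1 ∨ u.1 - v.1 = 0 ∨ u.1 - v.1 = 1 := by omega
    have hb : u.2 - v.2 = -1 ∨ u.2 - v.2 = 0 ∨ u.2 - v.2 = 1 := by omega
    rcases ha with ha|ha|ha <;> rcases hb with hb|hb|hb <;> rw [ha, hb] at h <;>
      first
        | (simp only [Prod.ext_iff] ; omega)
        | norm_num at h
  · rintro (rfl|rfl|rfl|rfl) <;> simp <;> ring

lemma adj_self_nbrs (v : ℤ × ℤ) :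
    adj (v.1+1, v.2) v ∧ adj (v.1-1, v.2) v ∧ adj (v.1, v.2+1) v ∧ adj (v.1, v.2-1) v := by
  refine ⟨?_, ?_, ?_, ?_⟩ <;> unfold adj <;> simp <;> ring

/-- The finset of the four lattice neighbours. -/
def nbrs (v : ℤ × ℤ) : Finset (ℤ × ℤ) :=
  {(v.1+1, v.2), (v.1-1, v.2), (v.1, v.2+1), (v.1, v.2-1)}

lemma sum_nbrs_eq {R : Type*} [CommRing R] (v : ℤ × ℤ) (F : ℤ × ℤ → R) :
    ∑ w ∈ nbrs v, F w = F (v.1+1, v.2) + F (v.1-1, v.2) + F (v.1, v.2+1) + F (v.1, v.2-1) := by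
  have h1 : ((v.1+1, v.2) : ℤ × ℤ) ∉ ({(v.1-1, v.2), (v.1, v.2+1), (v.1, v.2-1)} : Finset (ℤ × ℤ)) := by
    simp only [Finset.mem_insert, Finset.mem_singleton, Prod.ext_iff]; omega
  have h2 : ((v.1-1, v.2) : ℤ × ℤ) ∉ ({(v.1, v.2+1), (v.1, v.2-1)} : Finset (ℤ × ℤ)) := by
    simp only [Finset.mem_insert, Finset.mem_singleton, Prod.ext_iff]; omega
  have h3 : ((v.1, v.2+1) : ℤ × ℤ) ∉ ({(v.1, v.2-1)} : Finset (ℤ × ℤ)) := by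
    simp only [Finset.mem_singleton, Prod.ext_iff]; omega
  rw [nbrs, Finset.sum_insert h1, Finset.sum_insert h2, Finset.sum_insert h3,
    Finset.sum_singleton]
  ring

lemma card_nbrs (v : ℤ × ℤ) : (nbrs v).card = 4 := by
  have h1 : ((v.1+1, v.2) : ℤ × ℤ) ∉ ({(v.1-1, v.2), (v.1, v.2+1), (v.1, v.2-1)} : Finset (ℤ × ℤ)) := by
    simp only [Finset.mem_insert, Finset.mem_singleton, Prod.ext_iff]; omega
  have h2 : ((v.1-1, v.2) : ℤ × ℤ) ∉ ({(v.1, v.2+1), (v.1, v.2-1)} : Finset (ℤ × ℤ)) := by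
    simp only [Finset.mem_insert, Finset.mem_singleton, Prod.ext_iff]; omega
  have h3 : ((v.1, v.2+1) : ℤ × ℤ) ∉ ({(v.1, v.2-1)} : Finset (ℤ × ℤ)) := by
    simp only [Finset.mem_singleton, Prod.ext_iff]; omega
  rw [nbrs, Finset.card_insert_of_notMem h1, Finset.card_insert_of_notMem h2,
    Finset.card_insert_of_notMem h3, Finset.card_singleton]

lemma mem_nbrs_iff (w v : ℤ × ℤ) : w ∈ nbrs v ↔ adj w v := by
  rw [adj_iff, nbrs]
  simp [Finset.mem_insert, Finset.mem_singleton]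

/-- The filtered sum in `lap` equals a sum over the four neighbours, provided `F`
vanishes on neighbours outside `Γ`. -/
lemma lap_sum_eq {R : Type*} [CommRing R] (Γ : Finset (ℤ × ℤ)) (v : ℤ × ℤ) (F : ℤ × ℤ → R)
    (hF : ∀ w, adj w v → w ∉ Γ → F w = 0) :
    (∑ w ∈ Γ.attach.filter (fun w => adj w.1 v), F w.1)
      = F (v.1+1, v.2) + F (v.1-1, v.2) + F (v.1, v.2+1) + F (v.1, v.2-1) := by
  have h1 : (∑ w ∈ Γ.attach.filter (fun w => adj w.1 v), F w.1)
      = ∑ w ∈ Γ.filter (fun w => adj w v), F w := by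
    rw [Finset.sum_filter, Finset.sum_filter]
    exact Finset.sum_attach Γ (fun w => if adj w v then F w else 0)
  rw [h1, ← sum_nbrs_eq]
  apply Finset.sum_subset
  · intro w hw
    rw [Finset.mem_filter] at hw
    rw [mem_nbrs_iff]
    exact hw.2
  · intro w hw hw2
    have hadj : adj w v := (mem_nbrs_iff w v).mp hw
    apply hF w hadj
    intro hwΓ
    exact hw2 (Finset.mem_filter.mpr ⟨hwΓ, hadj⟩)

lemma lap_nonpos_of_lap_eq_zero (Γ : Finset (ℤ × ℤ)) (g : ↥Γ → ℚ)
    (hg : lap Γ g = 0) (v : ↥Γ) : g v ≤ 0 := by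
  by_contra hc
  push_neg at hc
  have hne : Γ.attach.Nonempty := ⟨v, Finset.mem_attach _ _⟩
  obtain ⟨v₁, _, hv₁⟩ := Finset.exists_max_image Γ.attach g hne
  set m := g v₁ with hm_def
  have hm : 0 < m := lt_of_lt_of_le hc (hv₁ v (Finset.mem_attach _ _))
  set A := Γ.attach.filter (fun w => g w = m) with hA_def
  have hAne : A.Nonempty := ⟨v₁, Finset.mem_filter.mpr ⟨Finset.mem_attach _ _, rfl⟩⟩
  obtain ⟨u, huA, hu⟩ := Finset.exists_max_image A (fun w => w.1.1) hAne
  have hgu : g u = m := (Finset.mem_filter.mp huA).2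
  set T := Γ.attach.filter (fun w => adj w.1 u.1) with hT_def
  have hsum : ∑ w ∈ T, g w = 4 * m := by
    have := congrFun hg u
    simp only [lap, Pi.zero_apply] at this
    rw [hgu] at this
    linarith [this]
  -- T.card ≤ 4
  have himg : T.image Subtype.val ⊆ nbrs u.1 := by
    intro w hw
    rw [Finset.mem_image] at hw
    obtain ⟨t, htT, rfl⟩ := hw
    rw [mem_nbrs_iff]
    exact (Finset.mem_filter.mp htT).2
  have hcardim : (T.image Subtype.val).card = T.card :=
    Finset.card_image_of_injective T Subtype.val_injective
  have hT4 : T.card ≤ 4 := by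
    have := Finset.card_le_card himg
    rw [hcardim, card_nbrs] at this
    exact this
  have hub : ∀ w ∈ T, g w ≤ m := fun w _ => hv₁ w (Finset.mem_attach _ _)
  have hsum_le : ∑ w ∈ T, g w ≤ (T.card : ℚ) * m := by
    calc ∑ w ∈ T, g w ≤ ∑ _w ∈ T, m := Finset.sum_le_sum hub
    _ = (T.card : ℚ) * m := by rw [Finset.sum_const, nsmul_eq_mul]
  have hTcard : T.card = 4 := by
    have h4 : (4 : ℚ) * m ≤ (T.card : ℚ) * m := by rw [← hsum]; exact hsum_le
    have : (4 : ℚ) ≤ (T.card : ℚ) := le_of_mul_le_mul_right (by linarith) hm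
    have : (4 : ℕ) ≤ T.card := by exact_mod_cast this
    omega
  have hall : ∀ w ∈ T, g w = m := by
    have hz : ∑ w ∈ T, (m - g w) = 0 := by
      rw [Finset.sum_sub_distrib, hsum, Finset.sum_const, hTcard]
      norm_num
    intro w hw
    have := (Finset.sum_eq_zero_iff_of_nonneg
      (fun w hw => by linarith [hub w hw])).mp hz w hw
    linarith
  -- the right neighbour is in T
  have himgeq : T.image Subtype.val = nbrs u.1 := by
    apply Finset.eq_of_subset_of_card_le himg
    rw [card_nbrs, hcardim, hTcard]
  have hmem : ((u.1.1 + 1, u.1.2) : ℤ × ℤ) ∈ T.image Subtype.val := by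
    rw [himgeq, mem_nbrs_iff]
    exact (adj_self_nbrs u.1).1
  rw [Finset.mem_image] at hmem
  obtain ⟨w, hwT, hw1⟩ := hmem
  have hgw : g w = m := hall w hwT
  have hwA : w ∈ A := Finset.mem_filter.mpr ⟨Finset.mem_attach _ _, hgw⟩
  have := hu w hwA
  have : w.1.1 = u.1.1 + 1 := by rw [hw1]
  omega

lemma lap_injective_rat (Γ : Finset (ℤ × ℤ)) (f : ↥Γ → ℚ) (hf : lap Γ f = 0) : f = 0 := by
  funext v
  have h1 := lap_nonpos_of_lap_eq_zero Γ f hf v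
  have h2 := lap_nonpos_of_lap_eq_zero Γ (-f) (by rw [lap_neg Γ f, hf]; simp) v
  simp only [Pi.neg_apply, Pi.zero_apply] at h2 ⊢
  linarith

lemma mem_squareDomain (M : ℕ) (p : ℤ × ℤ) :
    p ∈ squareDomain M ↔ 1 ≤ p.1 ∧ p.1 ≤ (M : ℤ) ∧ 1 ≤ p.2 ∧ p.2 ≤ (M : ℤ) := by
  simp [squareDomain, Finset.mem_product, Finset.mem_Icc, and_assoc]

/-- Extension by zero of a function on `Γ` to all of `ℤ²`. -/
def ztil {R : Type*} [CommRing R] (Γ : Finset (ℤ × ℤ)) (f : ↥Γ → R) (p : ℤ × ℤ) : R :=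
  if h : p ∈ Γ then f ⟨p, h⟩ else 0

lemma ztil_eq_zero {R : Type*} [CommRing R] (Γ : Finset (ℤ × ℤ)) (f : ↥Γ → R)
    (p : ℤ × ℤ) (h : p ∉ Γ) : ztil Γ f p = 0 := dif_neg h

/-- Odd-periodic extension of a function on the `M×M` square to all of `ℤ²`. -/
noncomputable def extFun {R : Type*} [CommRing R] (M : ℕ) (f : ↥(squareDomain M) → R) (p : ℤ × ℤ) : R :=
  ((sgn1 ((M : ℤ)+1) p.1 * sgn1 ((M : ℤ)+1) p.2 : ℤ) : R) *
    ztil (squareDomain M) f (rep1 ((M : ℤ)+1) p.1, rep1 ((M : ℤ)+1) p.2)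

lemma ext_lap_comm {R : Type*} [CommRing R] (M N : ℕ) (hM : 1 ≤ M)
    (hdvd : ((M : ℤ) + 1) ∣ ((N : ℤ) + 1)) (f : ↥(squareDomain M) → R)
    (v : ↥(squareDomain N)) :
    lap (squareDomain N) (fun w => extFun M f w.1) v = extFun M (lap (squareDomain M) f) v.1 := by
  set K : ℤ := (M : ℤ) + 1 with hK_def
  have hK : 2 ≤ K := by omega
  have hvmem := v.2
  rw [mem_squareDomain] at hvmem
  set x := (v : ℤ × ℤ).1 with hx_def
  set y := (v : ℤ × ℤ).2 with hy_def
  -- boundary vanishing for the extension on neighbours outside Γ_N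
  have hbd : ∀ w, adj w (v : ℤ × ℤ) → w ∉ squareDomain N → extFun M f w = 0 := by
    intro w hadj hnot
    rw [adj_iff] at hadj
    rw [mem_squareDomain] at hnot
    have h0 : sgn1 K w.1 = 0 ∨ sgn1 K w.2 = 0 := by
      rcases hadj with rfl|rfl|rfl|rfl
      · left
        apply sgn1_of_dvd K _ hK
        have : x + 1 = 0 ∨ x + 1 = (N : ℤ) + 1 := by
          simp only at hnot; omega
        rcases this with h|h
        · rw [show ((x+1, y).1 : ℤ) = x + 1 from rfl, h]; exact dvd_zero K
        · rw [show ((x+1, y).1 : ℤ) = x + 1 from rfl, h]; exact hdvd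
      · left
        apply sgn1_of_dvd K _ hK
        have : x - 1 = 0 ∨ x - 1 = (N : ℤ) + 1 := by
          simp only at hnot; omega
        rcases this with h|h
        · rw [show ((x-1, y).1 : ℤ) = x - 1 from rfl, h]; exact dvd_zero K
        · rw [show ((x-1, y).1 : ℤ) = x - 1 from rfl, h]; exact hdvd
      · right
        apply sgn1_of_dvd K _ hK
        have : y + 1 = 0 ∨ y + 1 = (N : ℤ) + 1 := by
          simp only at hnot; omega
        rcases this with h|h
        · rw [show ((x, y+1).2 : ℤ) = y + 1 from rfl, h]; exact dvd_zero K
        · rw [show ((x, y+1).2 : ℤ) = y + 1 from rfl, h]; exact hdvd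
      · right
        apply sgn1_of_dvd K _ hK
        have : y - 1 = 0 ∨ y - 1 = (N : ℤ) + 1 := by
          simp only at hnot; omega
        rcases this with h|h
        · rw [show ((x, y-1).2 : ℤ) = y - 1 from rfl, h]; exact dvd_zero K
        · rw [show ((x, y-1).2 : ℤ) = y - 1 from rfl, h]; exact hdvd
    unfold extFun
    rcases h0 with h|h <;> rw [h] <;> push_cast <;> ring
  simp only [lap]
  rw [lap_sum_eq (squareDomain N) (v : ℤ × ℤ) (extFun M f) hbd]
  -- one-dimensional identities
  have hu1 : ∀ z : ℤ, z ≤ 0 ∨ K ≤ z →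
      ztil (squareDomain M) f (z, rep1 K y) = 0 := by
    intro z hz
    apply ztil_eq_zero
    rw [mem_squareDomain]
    simp only [not_and, not_le]
    omega
  have hu2 : ∀ z : ℤ, z ≤ 0 ∨ K ≤ z →
      ztil (squareDomain M) f (rep1 K x, z) = 0 := by
    intro z hz
    apply ztil_eq_zero
    rw [mem_squareDomain]
    simp only [not_and, not_le]
    omega
  have hor := oneD K hK (fun z => ztil (squareDomain M) f (z, rep1 K y)) hu1 x
  have hver := oneD K hK (fun z => ztil (squareDomain M) f (rep1 K x, z)) hu2 y
  unfold extFun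
  simp only [show ((x+1, y).1 : ℤ) = x + 1 from rfl, show ((x+1, y).2 : ℤ) = y from rfl,
    show ((x-1, y).1 : ℤ) = x - 1 from rfl, show ((x-1, y).2 : ℤ) = y from rfl,
    show ((x, y+1).1 : ℤ) = x from rfl, show ((x, y+1).2 : ℤ) = y + 1 from rfl,
    show ((x, y-1).1 : ℤ) = x from rfl, show ((x, y-1).2 : ℤ) = y - 1 from rfl]
  by_cases hz : sgn1 K x * sgn1 K y = 0
  · have hcast : ((sgn1 K x : ℤ) : R) * ((sgn1 K y : ℤ) : R) = 0 := by
      have : ((sgn1 K x * sgn1 K y : ℤ) : R) = 0 := by rw [hz]; push_cast; ring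
      push_cast at this
      exact this
    push_cast
    linear_combination ((sgn1 K y : ℤ) : R) * hor + ((sgn1 K x : ℤ) : R) * hver +
      (ztil (squareDomain M) f (rep1 K x + 1, rep1 K y)
        + ztil (squareDomain M) f (rep1 K x - 1, rep1 K y)
        + ztil (squareDomain M) f (rep1 K x, rep1 K y + 1)
        + ztil (squareDomain M) f (rep1 K x, rep1 K y - 1)
        - 4 * ztil (squareDomain M) f (rep1 K x, rep1 K y)
        - ztil (squareDomain M) (lap (squareDomain M) f) (rep1 K x, rep1 K y)) * hcast
  · have hsx : sgn1 K x ≠ 0 := fun h => hz (by rw [h]; ring)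
    have hsy : sgn1 K y ≠ 0 := fun h => hz (by rw [h]; ring)
    obtain ⟨hrx1, hrx2⟩ := rep1_of_sgn1_ne K x hK hsx
    obtain ⟨hry1, hry2⟩ := rep1_of_sgn1_ne K y hK hsy
    have hp : (rep1 K x, rep1 K y) ∈ squareDomain M := by
      rw [mem_squareDomain]; simp only; omega
    have hinner : ztil (squareDomain M) f (rep1 K x + 1, rep1 K y)
        + ztil (squareDomain M) f (rep1 K x - 1, rep1 K y)
        + ztil (squareDomain M) f (rep1 K x, rep1 K y + 1)
        + ztil (squareDomain M) f (rep1 K x, rep1 K y - 1)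
        - 4 * ztil (squareDomain M) f (rep1 K x, rep1 K y)
        = ztil (squareDomain M) (lap (squareDomain M) f) (rep1 K x, rep1 K y) := by
      rw [show ztil (squareDomain M) (lap (squareDomain M) f) (rep1 K x, rep1 K y)
        = lap (squareDomain M) f ⟨(rep1 K x, rep1 K y), hp⟩ from dif_pos hp]
      simp only [lap]
      have hsum : (∑ w ∈ (squareDomain M).attach.filter
            (fun w => adj w.1 ((rep1 K x, rep1 K y) : ℤ × ℤ)), f w)
          = ∑ w ∈ (squareDomain M).attach.filter
            (fun w => adj w.1 ((rep1 K x, rep1 K y) : ℤ × ℤ)), ztil (squareDomain M) f w.1 := by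
        apply Finset.sum_congr rfl
        intro w _
        show f w = ztil (squareDomain M) f w.1
        rw [show ztil (squareDomain M) f w.1 = f ⟨w.1, w.2⟩ from dif_pos w.2]
      rw [hsum, lap_sum_eq (squareDomain M) ((rep1 K x, rep1 K y) : ℤ × ℤ)
        (ztil (squareDomain M) f) (fun w _ hw => ztil_eq_zero _ _ _ hw)]
      rw [show ztil (squareDomain M) f (rep1 K x, rep1 K y)
        = f ⟨(rep1 K x, rep1 K y), hp⟩ from dif_pos hp]
    push_cast
    linear_combination ((sgn1 K y : ℤ) : R) * hor + ((sgn1 K x : ℤ) : R) * hver +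
      ((sgn1 K x : ℤ) : R) * ((sgn1 K y : ℤ) : R) * hinner

lemma ext_restrict {R : Type*} [CommRing R] (M : ℕ) (hM : 1 ≤ M)
    (f : ↥(squareDomain M) → R) (v : ↥(squareDomain M)) : extFun M f v.1 = f v := by
  have hv := v.2
  rw [mem_squareDomain] at hv
  obtain ⟨hs1, hr1⟩ := sgn1_in_range ((M : ℤ)+1) (v : ℤ × ℤ).1 (by omega) (by omega) (by omega)
  obtain ⟨hs2, hr2⟩ := sgn1_in_range ((M : ℤ)+1) (v : ℤ × ℤ).2 (by omega) (by omega) (by omega)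
  unfold extFun
  rw [hs1, hs2, hr1, hr2, Prod.mk.eta,
    show ztil (squareDomain M) f (v : ℤ × ℤ) = f ⟨(v : ℤ × ℤ), v.2⟩ from dif_pos v.2]
  norm_num

lemma ztil_add {R : Type*} [CommRing R] (Γ : Finset (ℤ × ℤ)) (f g : ↥Γ → R) (p : ℤ × ℤ) :
    ztil Γ (f + g) p = ztil Γ f p + ztil Γ g p := by
  unfold ztil; split_ifs <;> simp

lemma extFun_add {R : Type*} [CommRing R] (M : ℕ) (f g : ↥(squareDomain M) → R) (p : ℤ × ℤ) :
    extFun M (f + g) p = extFun M f p + extFun M g p := by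
  unfold extFun
  rw [ztil_add]
  ring

lemma ztil_cast (Γ : Finset (ℤ × ℤ)) (f : ↥Γ → ℤ) (p : ℤ × ℤ) :
    ztil Γ (fun v => ((f v : ℤ) : ℚ)) p = ((ztil Γ f p : ℤ) : ℚ) := by
  unfold ztil; split_ifs <;> simp

lemma extFun_cast (M : ℕ) (f : ↥(squareDomain M) → ℤ) (p : ℤ × ℤ) :
    extFun M (fun v => ((f v : ℤ) : ℚ)) p = ((extFun M f p : ℤ) : ℚ) := by
  unfold extFun
  rw [ztil_cast]
  push_cast
  ring

lemma lap_cast (Γ : Finset (ℤ × ℤ)) (g : ↥Γ → ℤ) :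
    lap Γ (fun v => ((g v : ℤ) : ℚ)) = fun v => ((lap Γ g v : ℤ) : ℚ) := by
  funext v
  simp only [lap]
  push_cast
  ring

lemma lap_sub_rat (Γ : Finset (ℤ × ℤ)) (f g : ↥Γ → ℚ) :
    lap Γ (f - g) = lap Γ f - lap Γ g := by
  rw [sub_eq_add_neg, lap_add, lap_neg, sub_eq_add_neg]


/-- If `M+1` divides `N+1`, there is an injective group
homomorphism from the sandpile group on the `M×M` square domain to the sandpile
group on the `N×N` square domain. -/
theorem square_sandpile_monomorphism (M N : ℕ) (hM : 1 ≤ M) (hN : 1 ≤ N)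
    (hdvd : (M + 1) ∣ (N + 1)) :
    ∃ f : SandpileGroup (squareDomain M) →+ SandpileGroup (squareDomain N),
      Function.Injective f := by
  have hdvdZ : ((M : ℤ) + 1) ∣ ((N : ℤ) + 1) := by exact_mod_cast hdvd
  have hMN : (M : ℤ) ≤ (N : ℤ) := by
    have := Int.le_of_dvd (by positivity) hdvdZ
    omega
  have hsub : squareDomain M ⊆ squareDomain N := by
    intro p hp
    rw [mem_squareDomain] at hp ⊢
    omega
  -- the extension map as an additive homomorphism
  let E : (↥(squareDomain M) → ℤ) →+ (↥(squareDomain N) → ℤ) :=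
    AddMonoidHom.mk' (fun f v => extFun M f v.1)
      (fun f g => funext fun v => extFun_add M f g v.1)
  let ψ : (↥(squareDomain M) → ℤ) →+ SandpileGroup (squareDomain N) :=
    (sandMk (squareDomain N)).comp E
  have hker : (lapHom (squareDomain M)).range ≤ ψ.ker := by
    rintro g ⟨f, rfl⟩
    rw [AddMonoidHom.mem_ker]
    show QuotientAddGroup.mk' (lapHom (squareDomain N)).range (E (lapHom (squareDomain M) f)) = 0
    rw [QuotientAddGroup.mk'_apply, QuotientAddGroup.eq_zero_iff]
    refine ⟨E f, ?_⟩
    show lap (squareDomain N) (fun v => extFun M f v.1) = fun v => extFun M (lap (squareDomain M) f) v.1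
    exact funext (ext_lap_comm M N hM hdvdZ f)
  refine ⟨QuotientAddGroup.lift _ ψ hker, ?_⟩
  refine (injective_iff_map_eq_zero _).mpr ?_
  intro a ha
  obtain ⟨z, rfl⟩ := QuotientAddGroup.mk'_surjective (lapHom (squareDomain M)).range a
  have ha' : ((E z : ↥(squareDomain N) → ℤ) :
      (↥(squareDomain N) → ℤ) ⧸ (lapHom (squareDomain N)).range) = 0 := ha
  obtain ⟨g, hg⟩ := (QuotientAddGroup.eq_zero_iff (E z)).mp ha'
  -- pass to ℚ
  let L : (↥(squareDomain M) → ℚ) →ₗ[ℚ] (↥(squareDomain M) → ℚ) :=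
    { toFun := lap (squareDomain M)
      map_add' := lap_add (squareDomain M)
      map_smul' := fun c f => lap_smul (squareDomain M) c f }
  have hLinj : Function.Injective L := by
    intro a b hab
    have h0 : lap (squareDomain M) (a - b) = 0 := by
      rw [lap_sub_rat]
      show L a - L b = 0
      rw [hab]; ring
    have := lap_injective_rat (squareDomain M) (a - b) h0
    have := sub_eq_zero.mp this
    exact this
  obtain ⟨hQ, hhQ⟩ := LinearMap.injective_iff_surjective.mp hLinj (fun v => ((z v : ℤ) : ℚ))
  have hhQ' : lap (squareDomain M) hQ = fun v => ((z v : ℤ) : ℚ) := hhQ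
  -- the two candidate ℚ-solutions agree
  have hEq : (fun v : ↥(squareDomain N) => extFun M hQ v.1)
      = fun v : ↥(squareDomain N) => ((g v : ℤ) : ℚ) := by
    have hl1 : lap (squareDomain N) (fun v : ↥(squareDomain N) => extFun M hQ v.1)
        = fun v => extFun M (lap (squareDomain M) hQ) v.1 :=
      funext (ext_lap_comm M N hM hdvdZ hQ)
    have hl2 : lap (squareDomain N) (fun v : ↥(squareDomain N) => ((g v : ℤ) : ℚ))
        = fun v => ((lap (squareDomain N) g v : ℤ) : ℚ) := lap_cast _ g
    have hlap_g : lap (squareDomain N) g = fun v => extFun M z v.1 := hg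
    have hsame : lap (squareDomain N) (fun v : ↥(squareDomain N) => extFun M hQ v.1)
        = lap (squareDomain N) (fun v : ↥(squareDomain N) => ((g v : ℤ) : ℚ)) := by
      rw [hl1, hl2, hhQ', hlap_g]
      funext v
      exact extFun_cast M z v.1
    have hz0 : lap (squareDomain N)
        ((fun v : ↥(squareDomain N) => extFun M hQ v.1)
          - fun v : ↥(squareDomain N) => ((g v : ℤ) : ℚ)) = 0 := by
      rw [lap_sub_rat, hsame]; ring
    have := lap_injective_rat (squareDomain N) _ hz0
    have := sub_eq_zero.mp this
    exact this
  -- hQ is integer-valued: it agrees with g on Γ_M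
  have hQval : ∀ v : ↥(squareDomain M), hQ v = ((g ⟨v.1, hsub v.2⟩ : ℤ) : ℚ) := by
    intro v
    have h1 := congrFun hEq ⟨v.1, hsub v.2⟩
    have h2 : extFun M hQ v.1 = hQ v := ext_restrict M hM hQ v
    exact h2.symm.trans h1
  -- conclude
  let h : ↥(squareDomain M) → ℤ := fun v => g ⟨v.1, hsub v.2⟩
  have hfinal : lapHom (squareDomain M) h = z := by
    funext v
    have hcast : ((lap (squareDomain M) h v : ℤ) : ℚ) = ((z v : ℤ) : ℚ) := by
      have hl := congrFun (lap_cast (squareDomain M) h) v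
      have heq : (fun w => ((h w : ℤ) : ℚ)) = hQ := by
        funext w
        exact (hQval w).symm
      rw [heq] at hl
      rw [← hl, hhQ']
    exact_mod_cast hcast
  show ((z : ↥(squareDomain M) → ℤ) :
      (↥(squareDomain M) → ℤ) ⧸ (lapHom (squareDomain M)).range) = 0
  exact (QuotientAddGroup.eq_zero_iff z).mpr ⟨h, hfinal⟩
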